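/- arXiv:2210.00892 — 3 statements merged into one kernel-verified Lean document; each statement's English description precedes it below -/
import Mathlib

section
/- Let r > 0 and define b: ℝ² → ℝ³ by b(x) = (0, 2r x₁/(r²x₁²+1), (r²x₁²-1)/(r²x₁²+1)). Then b takes values in S² and satisfies ∇×b = -(b₂/x₁)·b for all x with x₁ ≠ 0, where ∇×b := (∂₁, ∂₂, 0)ᵗ × b is the planar curl. -/
/-- Scalar partial derivative in the first variable. -/
noncomputable def spd₁ (f : ℝ × ℝ → ℝ) (x : ℝ × ℝ) : ℝ := fderiv ℝ f x (1, 0)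

/-- Scalar partial derivative in the second variable. -/
noncomputable def spd₂ (f : ℝ × ℝ → ℝ) (x : ℝ × ℝ) : ℝ := fderiv ℝ f x (0, 1)

/-- The planar curl `∇ × n = (∂₁, ∂₂, 0)ᵗ × n` of a map `n : ℝ × ℝ → Fin 3 → ℝ`. -/
noncomputable def planarCurl (n : ℝ × ℝ → Fin 3 → ℝ) (x : ℝ × ℝ) : Fin 3 → ℝ :=
  ![ spd₂ (fun y => n y 2) x,
     -(spd₁ (fun y => n y 2) x),
     spd₁ (fun y => n y 1) x - spd₂ (fun y => n y 0) x]

lemma aux_fderiv_comp_fst (g : ℝ → ℝ) (x : ℝ × ℝ) (hg : DifferentiableAt ℝ g x.1) :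
    fderiv ℝ (fun y : ℝ × ℝ => g y.1) x =
      (fderiv ℝ g x.1).comp (ContinuousLinearMap.fst ℝ ℝ ℝ) := by
  have : (fun y : ℝ × ℝ => g y.1) = g ∘ Prod.fst := rfl
  rw [this, fderiv_comp x hg differentiableAt_fst, fderiv_fst]

lemma aux_spd1 (g : ℝ → ℝ) (x : ℝ × ℝ) (hg : DifferentiableAt ℝ g x.1) :
    spd₁ (fun y : ℝ × ℝ => g y.1) x = deriv g x.1 := by
  rw [spd₁, aux_fderiv_comp_fst g x hg]
  simp only [ContinuousLinearMap.coe_comp', Function.comp_apply,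
    ContinuousLinearMap.coe_fst']
  rfl

lemma aux_spd2 (g : ℝ → ℝ) (x : ℝ × ℝ) (hg : DifferentiableAt ℝ g x.1) :
    spd₂ (fun y : ℝ × ℝ => g y.1) x = 0 := by
  rw [spd₂, aux_fderiv_comp_fst g x hg]
  simp

lemma denom_pos (r t : ℝ) : 0 < r ^ 2 * t ^ 2 + 1 := by positivity

lemma hasDerivAt_g1 (r t : ℝ) :
    HasDerivAt (fun s : ℝ => 2 * r * s / (r ^ 2 * s ^ 2 + 1))
      (2 * r * (1 - r ^ 2 * t ^ 2) / (r ^ 2 * t ^ 2 + 1) ^ 2) t := by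
  have hd : (r ^ 2 * t ^ 2 + 1) ≠ 0 := (denom_pos r t).ne'
  have h1 : HasDerivAt (fun s : ℝ => 2 * r * s) (2 * r) t := by
    simpa using (hasDerivAt_id t).const_mul (2 * r)
  have h2 : HasDerivAt (fun s : ℝ => r ^ 2 * s ^ 2 + 1) (2 * r ^ 2 * t) t := by
    have := ((hasDerivAt_pow 2 t).const_mul (r ^ 2)).add_const 1
    refine this.congr_deriv ?_
    ring
  have := h1.div h2 hd
  refine this.congr_deriv ?_
  field_simp
  ring

lemma hasDerivAt_g2 (r t : ℝ) :
    HasDerivAt (fun s : ℝ => (r ^ 2 * s ^ 2 - 1) / (r ^ 2 * s ^ 2 + 1))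
      (4 * r ^ 2 * t / (r ^ 2 * t ^ 2 + 1) ^ 2) t := by
  have hd : (r ^ 2 * t ^ 2 + 1) ≠ 0 := (denom_pos r t).ne'
  have h1 : HasDerivAt (fun s : ℝ => r ^ 2 * s ^ 2 - 1) (2 * r ^ 2 * t) t := by
    have := ((hasDerivAt_pow 2 t).const_mul (r ^ 2)).sub_const 1
    refine this.congr_deriv ?_
    ring
  have h2 : HasDerivAt (fun s : ℝ => r ^ 2 * s ^ 2 + 1) (2 * r ^ 2 * t) t := by
    have := ((hasDerivAt_pow 2 t).const_mul (r ^ 2)).add_const 1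
    refine this.congr_deriv ?_
    ring
  have := h1.div h2 hd
  refine this.congr_deriv ?_
  field_simp
  ring

theorem helical_map_beltrami (r : ℝ) (hr : 0 < r)
    (b : ℝ × ℝ → Fin 3 → ℝ)
    (hb : ∀ x : ℝ × ℝ, b x =
      ![ 0,
         2 * r * x.1 / (r ^ 2 * x.1 ^ 2 + 1),
         (r ^ 2 * x.1 ^ 2 - 1) / (r ^ 2 * x.1 ^ 2 + 1)]) :
    (∀ x : ℝ × ℝ, ∑ i : Fin 3, (b x i) ^ 2 = 1) ∧
    (∀ x : ℝ × ℝ, x.1 ≠ 0 →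
      planarCurl b x = -(b x 1 / x.1) • b x) := by
  constructor
  · intro x
    have hd : (r ^ 2 * x.1 ^ 2 + 1) ≠ 0 := (denom_pos r x.1).ne'
    rw [Fin.sum_univ_three]
    simp only [hb]
    simp [Matrix.cons_val_zero, Matrix.cons_val_one]
    field_simp
    ring
  · intro x hx
    have hd : (r ^ 2 * x.1 ^ 2 + 1) ≠ 0 := (denom_pos r x.1).ne'
    have hb0 : (fun y : ℝ × ℝ => b y 0) = fun y : ℝ × ℝ => (0 : ℝ) := by
      funext y; simp [hb y]
    have hb1 : (fun y : ℝ × ℝ => b y 1) =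
        fun y : ℝ × ℝ => 2 * r * y.1 / (r ^ 2 * y.1 ^ 2 + 1) := by
      funext y; simp [hb y]
    have hb2 : (fun y : ℝ × ℝ => b y 2) =
        fun y : ℝ × ℝ => (r ^ 2 * y.1 ^ 2 - 1) / (r ^ 2 * y.1 ^ 2 + 1) := by
      funext y; simp [hb y]
    have h1 := hasDerivAt_g1 r x.1
    have h2 := hasDerivAt_g2 r x.1
    have s1 : spd₁ (fun y => b y 1) x
        = 2 * r * (1 - r ^ 2 * x.1 ^ 2) / (r ^ 2 * x.1 ^ 2 + 1) ^ 2 := by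
      rw [hb1, aux_spd1 _ _ h1.differentiableAt, h1.deriv]
    have s2 : spd₁ (fun y => b y 2) x
        = 4 * r ^ 2 * x.1 / (r ^ 2 * x.1 ^ 2 + 1) ^ 2 := by
      rw [hb2, aux_spd1 _ _ h2.differentiableAt, h2.deriv]
    have s3 : spd₂ (fun y => b y 2) x = 0 := by
      rw [hb2, aux_spd2 _ _ h2.differentiableAt]
    have s4 : spd₂ (fun y => b y 0) x = 0 := by
      rw [hb0]; simp [spd₂]
    funext i
    fin_cases i <;>
      simp only [planarCurl, s1, s2, s3, s4, hb x, Pi.smul_apply, smul_eq_mul, Fin.zero_eta, Fin.mk_one, Fin.reduceFinMk,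
        Matrix.cons_val_zero, Matrix.cons_val_one, Matrix.head_cons,
        Matrix.cons_val_two, Matrix.tail_cons] <;>
      field_simp <;> ring
end

section
/- Let r > 0 and b(x) = (0, 2r x₁/(r²x₁²+1), (r²x₁²-1)/(r²x₁²+1)). Then for all x ∈ ℝ², the pointwise energy density identity holds: (1/2)|∇b|² + r·(b - e₃)·(∇×b) + (1/2)(b₃ - 1)² = 2(1-r²)/(r²x₁²+1)². -/
/-- `|∇n|² = |∂₁n|² + |∂₂n|²`, the Dirichlet energy density. -/
noncomputable def gradSq (n : ℝ × ℝ → Fin 3 → ℝ) (x : ℝ × ℝ) : ℝ :=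
  (∑ i : Fin 3, (spd₁ (fun y => n y i) x) ^ 2)
    + ∑ i : Fin 3, (spd₂ (fun y => n y i) x) ^ 2

lemma spd_comp_fst (g : ℝ → ℝ) (g' : ℝ) (x : ℝ × ℝ) (h : HasDerivAt g g' x.1) :
    spd₁ (fun y => g y.1) x = g' ∧ spd₂ (fun y => g y.1) x = 0 := by
  have H : HasFDerivAt (fun y : ℝ × ℝ => g y.1)
      (((ContinuousLinearMap.id ℝ ℝ).smulRight g').comp
        (ContinuousLinearMap.fst ℝ ℝ ℝ)) x :=
    (h.hasFDerivAt).comp x (hasFDerivAt_fst)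
  constructor <;> simp [spd₁, spd₂, H.fderiv]

theorem helical_energy_density (r : ℝ) (hr : 0 < r)
    (b : ℝ × ℝ → Fin 3 → ℝ)
    (hb : ∀ x : ℝ × ℝ, b x =
      ![ 0,
         2 * r * x.1 / (r ^ 2 * x.1 ^ 2 + 1),
         (r ^ 2 * x.1 ^ 2 - 1) / (r ^ 2 * x.1 ^ 2 + 1)]) :
    ∀ x : ℝ × ℝ,
      (1 / 2) * gradSq b x
        + r * dotProduct (b x - ![0, 0, 1]) (planarCurl b x)
        + (1 / 2) * (b x 2 - 1) ^ 2
      = 2 * (1 - r ^ 2) / (r ^ 2 * x.1 ^ 2 + 1) ^ 2 := by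
  intro x
  have hd : ∀ s : ℝ, r ^ 2 * s ^ 2 + 1 ≠ 0 := fun s => by positivity
  have hb0 : (fun y : ℝ × ℝ => b y 0) = fun y => (0 : ℝ) := by
    funext y; rw [hb]; simp
  have hb1 : (fun y : ℝ × ℝ => b y 1)
      = fun y => 2 * r * y.1 / (r ^ 2 * y.1 ^ 2 + 1) := by
    funext y; rw [hb]; simp
  have hb2 : (fun y : ℝ × ℝ => b y 2)
      = fun y => (r ^ 2 * y.1 ^ 2 - 1) / (r ^ 2 * y.1 ^ 2 + 1) := by
    funext y; rw [hb]; simp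
  have hden : HasDerivAt (fun s : ℝ => r ^ 2 * s ^ 2 + 1) (r ^ 2 * (2 * x.1)) x.1 := by
    have := ((hasDerivAt_pow 2 x.1).const_mul (r ^ 2)).add_const 1
    simpa using this
  have h1 : HasDerivAt (fun s : ℝ => 2 * r * s / (r ^ 2 * s ^ 2 + 1))
      ((2 * r * (r ^ 2 * x.1 ^ 2 + 1) - 2 * r * x.1 * (r ^ 2 * (2 * x.1)))
        / (r ^ 2 * x.1 ^ 2 + 1) ^ 2) x.1 := by
    have hnum : HasDerivAt (fun s : ℝ => 2 * r * s) (2 * r) x.1 := by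
      simpa using (hasDerivAt_id x.1).const_mul (2 * r)
    exact hnum.div hden (hd x.1)
  have h2 : HasDerivAt (fun s : ℝ => (r ^ 2 * s ^ 2 - 1) / (r ^ 2 * s ^ 2 + 1))
      ((r ^ 2 * (2 * x.1) * (r ^ 2 * x.1 ^ 2 + 1)
          - (r ^ 2 * x.1 ^ 2 - 1) * (r ^ 2 * (2 * x.1)))
        / (r ^ 2 * x.1 ^ 2 + 1) ^ 2) x.1 := by
    have hnum : HasDerivAt (fun s : ℝ => r ^ 2 * s ^ 2 - 1) (r ^ 2 * (2 * x.1)) x.1 := by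
      have := ((hasDerivAt_pow 2 x.1).const_mul (r ^ 2)).sub_const 1
      simpa using this
    exact hnum.div hden (hd x.1)
  have e0 : spd₁ (fun y : ℝ × ℝ => (0 : ℝ)) x = 0 ∧ spd₂ (fun y : ℝ × ℝ => (0 : ℝ)) x = 0 :=
    spd_comp_fst (fun _ => (0 : ℝ)) 0 x (hasDerivAt_const _ _)
  have e1 : spd₁ (fun y : ℝ × ℝ => 2 * r * y.1 / (r ^ 2 * y.1 ^ 2 + 1)) x
        = (2 * r * (r ^ 2 * x.1 ^ 2 + 1) - 2 * r * x.1 * (r ^ 2 * (2 * x.1)))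
            / (r ^ 2 * x.1 ^ 2 + 1) ^ 2
      ∧ spd₂ (fun y : ℝ × ℝ => 2 * r * y.1 / (r ^ 2 * y.1 ^ 2 + 1)) x = 0 :=
    spd_comp_fst _ _ x h1
  have e2 : spd₁ (fun y : ℝ × ℝ => (r ^ 2 * y.1 ^ 2 - 1) / (r ^ 2 * y.1 ^ 2 + 1)) x
        = (r ^ 2 * (2 * x.1) * (r ^ 2 * x.1 ^ 2 + 1)
            - (r ^ 2 * x.1 ^ 2 - 1) * (r ^ 2 * (2 * x.1))) / (r ^ 2 * x.1 ^ 2 + 1) ^ 2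
      ∧ spd₂ (fun y : ℝ × ℝ => (r ^ 2 * y.1 ^ 2 - 1) / (r ^ 2 * y.1 ^ 2 + 1)) x = 0 :=
    spd_comp_fst _ _ x h2
  simp only [gradSq, planarCurl, dotProduct, Fin.sum_univ_three, hb0, hb1, hb2,
    e0.1, e0.2, e1.1, e1.2, e2.1, e2.2, hb x, Pi.sub_apply]
  simp [Matrix.cons_val_zero, Matrix.cons_val_one]
  field_simp
  ring
end

section
/- Let θ(ρ) = π - 2·arctan(ρ) and L₁ := -(d/dρ)(ρ d/dρ) + (1+cos θ(ρ))²/ρ - ρ·θ'(ρ)². Then L₁(sin θ(ρ)/ρ) = 0 for all ρ > 0, i.e., the function ρ ↦ sin θ(ρ)/ρ = 2/(ρ²+1) lies in the kernel of L₁. -/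
open Real

private lemma sin_theta (ρ : ℝ) :
    Real.sin (π - 2 * Real.arctan ρ) = 2 * ρ / (ρ ^ 2 + 1) := by
  have h1 : Real.sqrt (1 + ρ ^ 2) ≠ 0 := by positivity
  have h2 : (ρ ^ 2 + 1 : ℝ) = Real.sqrt (1 + ρ ^ 2) * Real.sqrt (1 + ρ ^ 2) := by
    rw [Real.mul_self_sqrt (by positivity)]; ring
  rw [Real.sin_pi_sub, Real.sin_two_mul, Real.sin_arctan, Real.cos_arctan, h2]
  field_simp

private lemma cos_theta (ρ : ℝ) :
    Real.cos (π - 2 * Real.arctan ρ) = (ρ ^ 2 - 1) / (ρ ^ 2 + 1) := by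
  have h1 : Real.sqrt (1 + ρ ^ 2) ≠ 0 := by positivity
  have h2 : (ρ ^ 2 + 1 : ℝ) = Real.sqrt (1 + ρ ^ 2) * Real.sqrt (1 + ρ ^ 2) := by
    rw [Real.mul_self_sqrt (by positivity)]; ring
  rw [Real.cos_pi_sub, Real.cos_two_mul, Real.cos_arctan, h2]
  field_simp
  nlinarith [Real.sq_sqrt (show (0:ℝ) ≤ 1 + ρ ^ 2 by positivity), Real.mul_self_sqrt (show (0:ℝ) ≤ 1 + ρ ^ 2 by positivity)]

private lemma theta_deriv (θ : ℝ → ℝ)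
    (hθ : ∀ ρ : ℝ, θ ρ = π - 2 * Real.arctan ρ) (ρ : ℝ) :
    deriv θ ρ = -2 / (1 + ρ ^ 2) := by
  have hfun : θ = fun ρ => π - 2 * Real.arctan ρ := funext hθ
  rw [hfun]
  have h := (hasDerivAt_const ρ π).sub ((Real.hasDerivAt_arctan ρ).const_mul 2)
  rw [show (fun ρ : ℝ => π - 2 * Real.arctan ρ) = ((fun _ => π) - fun y => 2 * Real.arctan y) from rfl, h.deriv]
  field_simp
  ring

private lemma inner_deriv (θ : ℝ → ℝ)
    (hθ : ∀ ρ : ℝ, θ ρ = π - 2 * Real.arctan ρ) {s : ℝ} (hs : 0 < s) :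
    deriv (fun t => Real.sin (θ t) / t) s = -4 * s / (s ^ 2 + 1) ^ 2 := by
  have hev : (fun t => Real.sin (θ t) / t) =ᶠ[nhds s] (fun t => 2 / (t ^ 2 + 1)) := by
    filter_upwards [Ioi_mem_nhds hs] with t ht
    have ht0 : (t : ℝ) ≠ 0 := ne_of_gt ht
    have htn : t ^ 2 + 1 ≠ 0 := by positivity
    rw [hθ t, sin_theta t]
    field_simp
  rw [hev.deriv_eq]
  have hv : HasDerivAt (fun t : ℝ => t ^ 2 + 1) (2 * s) s := by
    simpa using (hasDerivAt_pow 2 s).add_const 1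
  have hne : s ^ 2 + 1 ≠ 0 := by positivity
  have h := (hasDerivAt_const s (2 : ℝ)).div hv hne
  rw [show (fun t : ℝ => 2 / (t ^ 2 + 1)) = ((fun _ => (2:ℝ)) / fun t => t ^ 2 + 1) from rfl, h.deriv]
  field_simp
  ring

theorem kernel_of_L1 (θ : ℝ → ℝ)
    (hθ : ∀ ρ : ℝ, θ ρ = π - 2 * Real.arctan ρ) :
    ∀ ρ > (0:ℝ),
      -(deriv (fun s => s * deriv (fun t => Real.sin (θ t) / t) s) ρ)
        + ((1 + Real.cos (θ ρ)) ^ 2 / ρ - ρ * (deriv θ ρ) ^ 2)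
            * (Real.sin (θ ρ) / ρ) = 0 := by
  intro ρ hρ
  have hρ0 : ρ ≠ 0 := ne_of_gt hρ
  have hne : ρ ^ 2 + 1 ≠ 0 := by positivity
  have hev : (fun s => s * deriv (fun t => Real.sin (θ t) / t) s)
      =ᶠ[nhds ρ] (fun s => -4 * s ^ 2 / (s ^ 2 + 1) ^ 2) := by
    filter_upwards [Ioi_mem_nhds hρ] with s hs
    rw [inner_deriv θ hθ hs]
    ring
  rw [hev.deriv_eq]
  have hu : HasDerivAt (fun s : ℝ => -4 * s ^ 2) (-4 * (2 * ρ)) ρ := by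
    simpa using (hasDerivAt_pow 2 ρ).const_mul (-4 : ℝ)
  have hv : HasDerivAt (fun s : ℝ => (s ^ 2 + 1) ^ 2)
      (2 * (ρ ^ 2 + 1) * (2 * ρ)) ρ := by
    simpa [mul_comm, mul_assoc, mul_left_comm] using
      (show HasDerivAt (fun s : ℝ => (s ^ 2 + 1) ^ 2) _ ρ from ((hasDerivAt_pow 2 ρ).add_const 1).pow 2)
  have hne2 : (ρ ^ 2 + 1) ^ 2 ≠ 0 := by positivity
  have hd := hu.div hv hne2
  rw [show (fun s : ℝ => -4 * s ^ 2 / (s ^ 2 + 1) ^ 2) = ((fun s => -4 * s ^ 2) / fun s => (s ^ 2 + 1) ^ 2) from rfl, hd.deriv, hθ ρ, sin_theta ρ, cos_theta ρ, theta_deriv θ hθ ρ]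
  field_simp
  ring
end
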